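/- Let f : ℂ → ℂ be differentiable on all of ℂ and satisfy the first-order ODE f′(z) + 2z·f(z) = 1 for every z ∈ ℂ. Then there exists a constant C ∈ ℂ such that for every z ∈ ℂ, f(z) = e^{-z^2} · ∑_{n=0}^{∞} z^{2n+1}/((2n+1)·n!) + C·e^{-z^2}; that is, every solution of the ODE has the form z e^{-z^2} ₁F₁(1/2;3/2;z^2) + C e^{-z^2}. In particular the unique solution with f(0) = 0 is Dawson's integral daw z = z e^{-z^2} ₁F₁(1/2;3/2;z^2). -/

import Mathlib

open Complex

noncomputable def dawH (z : ℂ) : ℂ :=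
  ∑' n : ℕ, z ^ (2 * n + 1) / ((2 * (n : ℂ) + 1) * (n.factorial : ℂ))

lemma two_n_one_ne (n : ℕ) : (2 * (n : ℂ) + 1) ≠ 0 := by
  have := Nat.cast_add_one_ne_zero (R := ℂ) (2 * n)
  push_cast at this
  exact this

lemma fact_ne (n : ℕ) : (n.factorial : ℂ) ≠ 0 := by
  exact_mod_cast n.factorial_ne_zero

lemma exp_sq_tsum (z : ℂ) : (∑' n : ℕ, z ^ (2 * n) / (n.factorial : ℂ)) = Complex.exp (z ^ 2) := by
  rw [Complex.exp_eq_exp_ℂ, NormedSpace.exp_eq_tsum_div]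
  exact tsum_congr fun n => by rw [pow_mul]

lemma summable_R (R : ℝ) : Summable fun n : ℕ => R ^ (2 * n) / (n.factorial : ℝ) := by
  refine (Real.summable_pow_div_factorial (R ^ 2)).congr fun n => ?_
  rw [pow_mul]

lemma dawH_hasDerivAt (z : ℂ) : HasDerivAt dawH (Complex.exp (z ^ 2)) z := by
  rw [← exp_sq_tsum]
  set R : ℝ := ‖z‖ + 1 with hR
  have hR0 : (0 : ℝ) < R := by positivity
  refine hasDerivAt_tsum_of_isPreconnected (u := fun n => R ^ (2 * n) / (n.factorial : ℝ))
    (g := fun (n : ℕ) (w : ℂ) => w ^ (2 * n + 1) / ((2 * (n : ℂ) + 1) * (n.factorial : ℂ)))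
    (g' := fun (n : ℕ) (w : ℂ) => w ^ (2 * n) / (n.factorial : ℂ))
    (summable_R R) Metric.isOpen_ball (convex_ball (0:ℂ) R).isPreconnected
    (fun n y _ => ?_) (fun n y hy => ?_) (y₀ := 0) (Metric.mem_ball_self hR0) ?_ ?_
  · have h := (hasDerivAt_pow (2 * n + 1) y).div_const ((2 * (n : ℂ) + 1) * (n.factorial : ℂ))
    refine h.congr_deriv ?_
    rw [show 2 * n + 1 - 1 = 2 * n from rfl]
    push_cast
    field_simp [two_n_one_ne n, fact_ne n]
  · simp only [Metric.mem_ball, dist_zero_right] at hy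
    rw [norm_div, norm_pow]
    have h1 : ‖(n.factorial : ℂ)‖ = (n.factorial : ℝ) := by
      simp [Complex.norm_natCast]
    rw [h1]
    have hfac : (0:ℝ) < (n.factorial : ℝ) := by exact_mod_cast n.factorial_pos
    apply div_le_div_of_nonneg_right ?_ hfac.le
    exact pow_le_pow_left₀ (norm_nonneg y) hy.le _
  · refine summable_zero.congr fun n => ?_
    simp [zero_pow (Nat.succ_ne_zero (2 * n))]
  · rw [Metric.mem_ball, dist_zero_right, hR]
    linarith

lemma dawH_zero : dawH 0 = 0 := by
  unfold dawH
  rw [← tsum_zero]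
  exact tsum_congr fun n => by simp [zero_pow (Nat.succ_ne_zero (2 * n))]

lemma dawH_integral (z : ℂ) :
    (∫ t in (0:ℝ)..1, z * Complex.exp (((t : ℂ) * z) ^ 2)) = dawH z := by
  set G : ℝ → ℂ := fun t =>
    ∑' n : ℕ, z ^ (2 * n + 1) * (t : ℂ) ^ (2 * n + 1) / ((2 * (n : ℂ) + 1) * (n.factorial : ℂ))
    with hG
  have hu : Summable fun n : ℕ => ‖z‖ ^ (2 * n + 1) * 2 ^ (2 * n) / (n.factorial : ℝ) := by
    refine ((Real.summable_pow_div_factorial (4 * ‖z‖ ^ 2)).mul_left ‖z‖).congr fun n => ?_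
    have h4 : (4 : ℝ) * ‖z‖ ^ 2 = (2 * ‖z‖) ^ 2 := by ring
    rw [h4, ← pow_mul, mul_pow, pow_succ]
    ring
  have hderiv : ∀ t : ℝ, t ∈ Metric.ball (0:ℝ) 2 →
      HasDerivAt G (z * Complex.exp (((t : ℂ) * z) ^ 2)) t := by
    intro t ht
    have key : HasDerivAt G
        (∑' n : ℕ, z ^ (2 * n + 1) * (t : ℂ) ^ (2 * n) / (n.factorial : ℂ)) t := by
      refine hasDerivAt_tsum_of_isPreconnected
        (u := fun n => ‖z‖ ^ (2 * n + 1) * 2 ^ (2 * n) / (n.factorial : ℝ))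
        (g := fun (n : ℕ) (s : ℝ) => z ^ (2 * n + 1) * (s : ℂ) ^ (2 * n + 1) / ((2 * (n : ℂ) + 1) * (n.factorial : ℂ)))
        (g' := fun (n : ℕ) (s : ℝ) => z ^ (2 * n + 1) * (s : ℂ) ^ (2 * n) / (n.factorial : ℂ))
        hu Metric.isOpen_ball (convex_ball (0:ℝ) 2).isPreconnected
        (fun n s _ => ?_) (fun n s hs => ?_) (y₀ := 0) (by norm_num) ?_ ht
      · have hp : HasDerivAt (fun s : ℝ => ((s : ℂ)) ^ (2 * n + 1))
            (((2 * n + 1 : ℕ) : ℂ) * (s : ℂ) ^ (2 * n)) s := by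
          have := (hasDerivAt_pow (2 * n + 1) (s : ℂ)).comp_ofReal
          simpa using this
        have h := (hp.const_mul (z ^ (2 * n + 1))).div_const ((2 * (n : ℂ) + 1) * (n.factorial : ℂ))
        refine h.congr_deriv ?_
        push_cast
        field_simp [two_n_one_ne n, fact_ne n]
      · simp only [Metric.mem_ball, dist_zero_right, Real.norm_eq_abs] at hs
        rw [norm_div, norm_mul, norm_pow, norm_pow]
        have h1 : ‖(n.factorial : ℂ)‖ = (n.factorial : ℝ) := by simp [Complex.norm_natCast]
        have h2 : ‖((s : ℝ) : ℂ)‖ = |s| := (Complex.norm_real s).trans (Real.norm_eq_abs s)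
        rw [h1, h2]
        have hfac : (0:ℝ) < (n.factorial : ℝ) := by exact_mod_cast n.factorial_pos
        apply div_le_div_of_nonneg_right ?_ hfac.le
        apply mul_le_mul_of_nonneg_left ?_ (by positivity)
        exact pow_le_pow_left₀ (abs_nonneg s) hs.le _
      · refine summable_zero.congr fun n => ?_
        simp [zero_pow (Nat.succ_ne_zero (2 * n))]
    convert key using 1
    have heq : ∀ n : ℕ, z * ((((t : ℂ) * z) ^ 2) ^ n) / (n.factorial : ℂ)
        = z ^ (2 * n + 1) * (t : ℂ) ^ (2 * n) / (n.factorial : ℂ) := by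
      intro n
      rw [mul_pow, mul_pow, ← pow_mul, ← pow_mul, pow_succ]
      ring
    rw [Complex.exp_eq_exp_ℂ, NormedSpace.exp_eq_tsum_div, ← tsum_mul_left]
    exact tsum_congr fun n => by rw [← heq n]; ring
  have hsub : Set.uIcc (0:ℝ) 1 ⊆ Metric.ball (0:ℝ) 2 := by
    intro x hx
    rw [Set.uIcc_of_le (by norm_num)] at hx
    simp only [Metric.mem_ball, dist_zero_right, Real.norm_eq_abs]
    rcases hx with ⟨h0, h1⟩
    rw [_root_.abs_of_nonneg h0]; linarith
  have hcont : Continuous fun t : ℝ => z * Complex.exp (((t : ℂ) * z) ^ 2) := by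
    fun_prop
  have hftc := intervalIntegral.integral_eq_sub_of_hasDerivAt
    (fun t ht => hderiv t (hsub ht)) (hcont.intervalIntegrable 0 1)
  rw [hftc]
  have hG0 : G 0 = 0 := by
    simp only [hG]
    refine (tsum_congr (fun n : ℕ => ?_)).trans tsum_zero
    simp [zero_pow (Nat.succ_ne_zero (2 * n))]
  have hG1 : G 1 = dawH z := by
    simp only [hG]
    unfold dawH
    exact tsum_congr fun n => by push_cast; simp
  rw [hG0, hG1, sub_zero]

/-- Every entire solution of `f′(z) + 2z f(z) = 1` has the form
`f(z) = e^{-z²} ∑ z^{2n+1}/((2n+1) n!) + C e^{-z²} = z e^{-z²} ₁F₁(1/2;3/2;z²) + C e^{-z²}`;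
in particular the unique solution with `f(0) = 0` is Dawson's integral
`daw z = e^{-z²} ∫₀^z e^{η²} dη = z e^{-z²} ₁F₁(1/2;3/2;z²)`. -/
theorem ode_solutions_dawson (f : ℂ → ℂ) (hf : Differentiable ℂ f)
    (hode : ∀ z : ℂ, deriv f z + 2 * z * f z = 1) :
    (∃ C : ℂ, ∀ z : ℂ,
      f z = Complex.exp (-z ^ 2) *
              (∑' n : ℕ, z ^ (2 * n + 1) / ((2 * (n : ℂ) + 1) * (n.factorial : ℂ)))
            + C * Complex.exp (-z ^ 2)) ∧
    (f 0 = 0 → ∀ z : ℂ,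
      f z = Complex.exp (-z ^ 2) * (z * ∫ t in (0:ℝ)..1, Complex.exp (((t : ℂ) * z) ^ 2)) ∧
      f z = z * Complex.exp (-z ^ 2) *
              ∑' n : ℕ, z ^ (2 * n) / ((2 * (n : ℂ) + 1) * (n.factorial : ℂ))) := by
  have hg : ∀ z : ℂ, HasDerivAt (fun w => Complex.exp (w ^ 2) * f w - dawH w) 0 z := by
    intro z
    have h1 : HasDerivAt (fun w : ℂ => Complex.exp (w ^ 2))
        (Complex.exp (z ^ 2) * (2 * z)) z := by
      have := (hasDerivAt_pow 2 z).cexp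
      simpa using this
    have h2 := (h1.mul (hf z).hasDerivAt).sub (dawH_hasDerivAt z)
    refine h2.congr_deriv ?_
    have h := hode z
    linear_combination (Complex.exp (z ^ 2)) * h
  have hgd : Differentiable ℂ (fun w => Complex.exp (w ^ 2) * f w - dawH w) :=
    fun z => (hg z).differentiableAt
  have hconst : ∀ z : ℂ, Complex.exp (z ^ 2) * f z - dawH z = f 0 := by
    intro z
    have h0 : (fun w => Complex.exp (w ^ 2) * f w - dawH w) z
        = (fun w => Complex.exp (w ^ 2) * f w - dawH w) 0 := by
      refine is_const_of_fderiv_eq_zero hgd (fun x => ?_) z 0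
      have hfd := (hg x).hasFDerivAt.fderiv
      rw [hfd]
      ext v
      simp
    simpa [dawH_zero] using h0
  have hsolve : ∀ z : ℂ, f z = Complex.exp (-z ^ 2) * dawH z + f 0 * Complex.exp (-z ^ 2) := by
    intro z
    have h := hconst z
    have hne : Complex.exp (z ^ 2) ≠ 0 := Complex.exp_ne_zero _
    rw [Complex.exp_neg]
    field_simp
    linear_combination h
  constructor
  · exact ⟨f 0, fun z => hsolve z⟩
  · intro h0 z
    have hfz : f z = Complex.exp (-z ^ 2) * dawH z := by
      rw [hsolve z, h0]; ring
    have hd : dawH z = z * ∑' n : ℕ, z ^ (2 * n) / ((2 * (n : ℂ) + 1) * (n.factorial : ℂ)) := by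
      unfold dawH
      rw [← tsum_mul_left]
      exact tsum_congr fun n => by rw [pow_succ]; ring
    constructor
    · rw [hfz, ← dawH_integral z, intervalIntegral.integral_const_mul]
    · rw [hfz, hd]; ring
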